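/- Let a < b be real numbers. Then every local minimum w* of the two-client MaxFL objective v(w) = (1/2)σ((w−a)²) + (1/2)σ((w−b)²) lies in the set (a, a+2] ∪ [b−2, b). -/

import Mathlib

noncomputable def sigmoid (x : ℝ) : ℝ := 1 / (1 + Real.exp (-x))

noncomputable def gfn (t : ℝ) : ℝ := Real.exp (-t) / (1 + Real.exp (-t)) ^ 2

noncomputable def hfn (t : ℝ) : ℝ := t * gfn (t ^ 2)

lemma gfn_pos (t : ℝ) : 0 < gfn t := by
  unfold gfn; positivity

lemma exp_neg_hasDerivAt (s : ℝ) :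
    HasDerivAt (fun x : ℝ => Real.exp (-x)) (-Real.exp (-s)) s := by
  refine ((Real.hasDerivAt_exp (-s)).comp s ((hasDerivAt_id s).neg)).congr_deriv ?_
  ring

lemma sigmoid_hasDerivAt (t : ℝ) : HasDerivAt sigmoid (gfn t) t := by
  have h1 : HasDerivAt (fun x : ℝ => 1 + Real.exp (-x)) (-Real.exp (-t)) t :=
    (exp_neg_hasDerivAt t).const_add 1
  have h2 := h1.inv (by positivity)
  have : sigmoid = fun x : ℝ => (1 + Real.exp (-x))⁻¹ := by
    funext x; simp [sigmoid, one_div]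
  rw [this]
  refine h2.congr_deriv ?_
  unfold gfn; ring

lemma gfn_hasDerivAt (s : ℝ) :
    HasDerivAt gfn
      ((-Real.exp (-s) * (1 + Real.exp (-s)) ^ 2 -
        Real.exp (-s) * (2 * (1 + Real.exp (-s)) ^ 1 * -Real.exp (-s))) /
        ((1 + Real.exp (-s)) ^ 2) ^ 2) s := by
  have hN := exp_neg_hasDerivAt s
  have hD : HasDerivAt (fun x : ℝ => (1 + Real.exp (-x)) ^ 2)
      (2 * (1 + Real.exp (-s)) ^ 1 * -Real.exp (-s)) s :=
    ((exp_neg_hasDerivAt s).const_add 1).pow 2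
  exact hN.div hD (by positivity)

lemma hfn_hasDerivAt (t : ℝ) :
    HasDerivAt hfn
      (1 * gfn (t ^ 2) + t *
        (((-Real.exp (-(t ^ 2)) * (1 + Real.exp (-(t ^ 2))) ^ 2 -
          Real.exp (-(t ^ 2)) * (2 * (1 + Real.exp (-(t ^ 2))) ^ 1 * -Real.exp (-(t ^ 2)))) /
          ((1 + Real.exp (-(t ^ 2))) ^ 2) ^ 2) * (2 * t ^ 1 * 1))) t := by
  have hsq : HasDerivAt (fun x : ℝ => x ^ 2) (2 * t ^ 1 * 1) t :=
    (hasDerivAt_id t).pow 2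
  have hg := (gfn_hasDerivAt (t ^ 2)).comp t hsq
  exact (hasDerivAt_id t).mul hg

lemma hfn_deriv_neg {t : ℝ} (ht : 2 < t) :
    deriv hfn t < 0 := by
  rw [(hfn_hasDerivAt t).deriv]
  set E := Real.exp (-(t ^ 2)) with hE
  have hEpos : 0 < E := Real.exp_pos _
  have hElt : E < 1 / 2 := by
    have h4 : (4 : ℝ) < t ^ 2 := by nlinarith
    have : E < Real.exp (-4) := by
      rw [hE]; exact Real.exp_lt_exp.mpr (by linarith)
    have h2 : Real.exp (-4) < 1 / 2 := by
      rw [Real.exp_neg]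
      rw [inv_lt_comm₀ (Real.exp_pos 4) (by norm_num)]
      have := Real.add_one_le_exp (4 : ℝ)
      norm_num
      linarith
    linarith
  have h1E : 0 < 1 + E := by linarith
  have key : 1 * gfn (t ^ 2) + t *
      (((-E * (1 + E) ^ 2 - E * (2 * (1 + E) ^ 1 * -E)) / ((1 + E) ^ 2) ^ 2) * (2 * t ^ 1 * 1))
      = (E / (1 + E) ^ 3) * ((1 + E) + 2 * t ^ 2 * (E - 1)) := by
    unfold gfn
    rw [← hE]
    field_simp
    ring
  rw [key]
  have hb : (1 + E) + 2 * t ^ 2 * (E - 1) < 0 := by nlinarith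
  have hc : 0 < E / (1 + E) ^ 3 := by positivity
  nlinarith

lemma hfn_strictAnti : StrictAntiOn hfn (Set.Ioi 2) := by
  apply strictAntiOn_of_deriv_neg (convex_Ioi 2)
  · exact fun x _ => ((hfn_hasDerivAt x).differentiableAt).continuousAt.continuousWithinAt
  · intro x hx
    rw [interior_Ioi] at hx
    exact hfn_deriv_neg hx

lemma f_hasDerivAt (a b x : ℝ) :
    HasDerivAt (fun w : ℝ => (1 / 2) * sigmoid ((w - a) ^ 2) + (1 / 2) * sigmoid ((w - b) ^ 2))
      ((x - a) * gfn ((x - a) ^ 2) + (x - b) * gfn ((x - b) ^ 2)) x := by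
  have ha : HasDerivAt (fun w : ℝ => (w - a) ^ 2) (2 * (x - a) ^ 1 * 1) x :=
    ((hasDerivAt_id x).sub_const a).pow 2
  have hb : HasDerivAt (fun w : ℝ => (w - b) ^ 2) (2 * (x - b) ^ 1 * 1) x :=
    ((hasDerivAt_id x).sub_const b).pow 2
  have h1 := ((sigmoid_hasDerivAt ((x - a) ^ 2)).comp x ha).const_mul (1 / 2 : ℝ)
  have h2 := ((sigmoid_hasDerivAt ((x - b) ^ 2)).comp x hb).const_mul (1 / 2 : ℝ)
  refine (h1.add h2).congr_deriv ?_
  ring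

theorem local_min_location (a b : ℝ) (hab : a < b) (w : ℝ)
    (hmin : IsLocalMin
      (fun w : ℝ => (1 / 2) * sigmoid ((w - a) ^ 2) + (1 / 2) * sigmoid ((w - b) ^ 2)) w) :
    w ∈ Set.Ioc a (a + 2) ∪ Set.Ico (b - 2) b := by
  set f := fun w : ℝ => (1 / 2) * sigmoid ((w - a) ^ 2) + (1 / 2) * sigmoid ((w - b) ^ 2) with hf
  have hderiv0 : (w - a) * gfn ((w - a) ^ 2) + (w - b) * gfn ((w - b) ^ 2) = 0 := by
    have := hmin.deriv_eq_zero
    rwa [(f_hasDerivAt a b w).deriv] at this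
  have hga := gfn_pos ((w - a) ^ 2)
  have hgb := gfn_pos ((w - b) ^ 2)
  have haw : a < w := by
    by_contra hle
    push_neg at hle
    nlinarith
  have hwb : w < b := by
    by_contra hle
    push_neg at hle
    nlinarith
  by_contra hnot
  simp only [Set.mem_union, Set.mem_Ioc, Set.mem_Ico, not_or, not_and, not_le, not_lt] at hnot
  obtain ⟨h1, h2⟩ := hnot
  have hw1 : a + 2 < w := h1 haw
  have hw2 : w < b - 2 := by
    by_contra hle
    push_neg at hle
    exact absurd hwb (not_lt.mpr (h2 hle))
  -- key equality hfn (w-a) = hfn (b-w)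
  have heq : hfn (w - a) = hfn (b - w) := by
    unfold hfn
    have : (w - b) ^ 2 = (b - w) ^ 2 := by ring
    rw [this] at hderiv0
    nlinarith [hderiv0]
  -- derivative negative on (w, b-2)
  have hderivneg : ∀ x ∈ Set.Ioo w (b - 2), deriv f x < 0 := by
    intro x hx
    obtain ⟨hx1, hx2⟩ := hx
    rw [(f_hasDerivAt a b x).deriv]
    have hrw : (x - a) * gfn ((x - a) ^ 2) + (x - b) * gfn ((x - b) ^ 2)
        = hfn (x - a) - hfn (b - x) := by
      unfold hfn
      have : (x - b) ^ 2 = (b - x) ^ 2 := by ring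
      rw [this]; ring
    rw [hrw]
    have m1 : hfn (x - a) < hfn (w - a) :=
      hfn_strictAnti (Set.mem_Ioi.mpr (by linarith)) (Set.mem_Ioi.mpr (by linarith))
        (by linarith)
    have m2 : hfn (b - w) < hfn (b - x) :=
      hfn_strictAnti (Set.mem_Ioi.mpr (by linarith)) (Set.mem_Ioi.mpr (by linarith))
        (by linarith)
    linarith [heq ▸ m1]
  -- f strictly anti on [w, b-2]
  have hanti : StrictAntiOn f (Set.Icc w (b - 2)) := by
    apply strictAntiOn_of_deriv_neg (convex_Icc _ _)
    · exact fun x _ => ((f_hasDerivAt a b x).differentiableAt).continuousAt.continuousWithinAt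
    · intro x hx
      rw [interior_Icc] at hx
      exact hderivneg x hx
  -- pick a point just right of w
  have hmem : Set.Ioc w (b - 2) ∈ nhdsWithin w (Set.Ioi w) :=
    Ioc_mem_nhdsGT_of_mem ⟨le_refl w, hw2⟩
  have hminR : ∀ᶠ x in nhdsWithin w (Set.Ioi w), f w ≤ f x :=
    hmin.filter_mono nhdsWithin_le_nhds
  obtain ⟨x, hle, hx1, hx2⟩ :=
    (hminR.and (Filter.eventually_of_mem hmem (fun _ h => h))).exists
  have hlt : f x < f w :=
    hanti ⟨le_refl w, le_of_lt hw2⟩ ⟨le_of_lt hx1, hx2⟩ hx1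
  linarith
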